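/- For every k ∈ N₂ it holds that recc(S_k^C) = recc(C) + {λ r^k : λ ≤ 0}. -/

import Mathlib

open Set Pointwise

noncomputable section

variable {n : ℕ} {ι : Type*} [Fintype ι]

/-- Recession cone of a set `A`. -/
def recc (A : Set (Fin n → ℝ)) : Set (Fin n → ℝ) :=
  {d | ∀ a ∈ A, ∀ t : ℝ, 0 ≤ t → a + t • d ∈ A}

/-- The translated simplicial cone `P^B = {x̄ + Σ_j x_j r^j : x_j ≥ 0}`. -/
def PBset (xb : Fin n → ℝ) (r : ι → Fin n → ℝ) : Set (Fin n → ℝ) :=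
  {x | ∃ c : ι → ℝ, (∀ j, 0 ≤ c j) ∧ x = xb + ∑ j, c j • r j}

/-- The recession cone of `P^B`, i.e. `{Σ_j t_j r^j : t_j ≥ 0}`. -/
def reccPBset (r : ι → Fin n → ℝ) : Set (Fin n → ℝ) :=
  {x | ∃ t : ι → ℝ, (∀ j, 0 ≤ t j) ∧ x = ∑ j, t j • r j}

/-- `λ⁻ = inf {λ ≥ 0 : x̄ + λ d ∈ C}` (`+∞` if the halfline misses `C`). -/
noncomputable def lamM (xb d : Fin n → ℝ) (C : Set (Fin n → ℝ)) : EReal :=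
  sInf ((fun l : ℝ => (l : EReal)) '' {l : ℝ | 0 ≤ l ∧ xb + l • d ∈ C})

/-- `λ⁺ = sup {λ ≥ 0 : x̄ + λ d ∈ C}` (`−∞` if the halfline misses `C`). -/
noncomputable def lamP (xb d : Fin n → ℝ) (C : Set (Fin n → ℝ)) : EReal :=
  sSup ((fun l : ℝ => (l : EReal)) '' {l : ℝ | 0 ≤ l ∧ xb + l • d ∈ C})

/-- `N₀`: indices whose halfline misses `C`. -/
def N0set (xb : Fin n → ℝ) (r : ι → Fin n → ℝ) (C : Set (Fin n → ℝ)) : Set ι :=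
  {j | ∀ l : ℝ, 0 ≤ l → xb + l • r j ∉ C}

/-- `N₁`: indices with `0 < λ⁻ < +∞` and `λ⁺ = +∞`. -/
def N1set (xb : Fin n → ℝ) (r : ι → Fin n → ℝ) (C : Set (Fin n → ℝ)) : Set ι :=
  {j | 0 < lamM xb (r j) C ∧ lamM xb (r j) C < ⊤ ∧ lamP xb (r j) C = ⊤}

/-- `N₂`: indices with `0 < λ⁻ < +∞` and `λ⁻ < λ⁺ < +∞`. -/
def N2set (xb : Fin n → ℝ) (r : ι → Fin n → ℝ) (C : Set (Fin n → ℝ)) : Set ι :=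
  {j | 0 < lamM xb (r j) C ∧ lamM xb (r j) C < ⊤ ∧
    lamM xb (r j) C < lamP xb (r j) C ∧ lamP xb (r j) C < ⊤}

/-- `S_k^C = {x̄} + conv(⋃_{j∈N₂} {λ r^j : 0 ≤ λ < λ⁺_j}) + {λ r^k : λ ≤ 0} + recc(C)`. -/
def SkCset (xb : Fin n → ℝ) (r : ι → Fin n → ℝ) (C : Set (Fin n → ℝ)) (k : ι) :
    Set (Fin n → ℝ) :=
  {xb} + convexHull ℝ (⋃ j ∈ N2set xb r C,
      {y : Fin n → ℝ | ∃ l : ℝ, 0 ≤ l ∧ (l : EReal) < lamP xb (r j) C ∧ y = l • r j})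
    + {y : Fin n → ℝ | ∃ l : ℝ, l ≤ 0 ∧ y = l • r k}
    + recc C

/-! ### Auxiliary lemmas -/

lemma recc_zero_mem (A : Set (Fin n → ℝ)) : 0 ∈ recc A := by
  intro a ha t _; simpa using ha

lemma recc_smul_mem {A : Set (Fin n → ℝ)} {d} (hd : d ∈ recc A) {t : ℝ} (ht : 0 ≤ t) :
    t • d ∈ recc A := by
  intro a ha s hs
  have := hd a ha (s * t) (mul_nonneg hs ht)
  simpa [mul_smul] using this

lemma recc_add_mem {A : Set (Fin n → ℝ)} {d e} (hd : d ∈ recc A) (he : e ∈ recc A) :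
    d + e ∈ recc A := by
  intro a ha t ht
  have h2 := he _ (hd a ha t ht) t ht
  have h3 : a + t • d + t • e = a + t • (d + e) := by rw [smul_add]; abel
  rwa [h3] at h2

lemma recc_isClosed {C : Set (Fin n → ℝ)} (hCopen : IsOpen C) (hCconv : Convex ℝ C) :
    IsClosed (recc C) := by
  have key : recc C = ⋂ (a : C), ⋂ (t : {t : ℝ // 0 ≤ t}),
      (fun d => (a : Fin n → ℝ) + (t : ℝ) • d) ⁻¹' closure C := by
    apply le_antisymm
    · intro d hd
      simp only [Set.mem_iInter, Set.mem_preimage]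
      intro a t
      exact subset_closure (hd a a.2 t t.2)
    · intro d hd
      simp only [Set.mem_iInter, Set.mem_preimage] at hd
      intro a ha t ht
      have hcl : a + (2 * t) • d ∈ closure C := hd ⟨a, ha⟩ ⟨2 * t, by linarith⟩
      have hint : (1/2 : ℝ) • a + (1/2 : ℝ) • (a + (2*t) • d) ∈ interior C :=
        hCconv.combo_interior_closure_mem_interior
          (by rwa [hCopen.interior_eq]) hcl (by norm_num) (by norm_num) (by norm_num)
      rw [hCopen.interior_eq] at hint
      have heq2 : (1/2 : ℝ) • a + (1/2 : ℝ) • (a + (2*t) • d) = a + t • d := by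
        match_scalars <;> ring
      rwa [heq2] at hint
  rw [key]
  exact isClosed_iInter fun a => isClosed_iInter fun t =>
    isClosed_closure.preimage (continuous_const.add (continuous_const_smul _))

lemma exists_coords [DecidableEq ι] (r : ι → Fin n → ℝ) (hr : LinearIndependent ℝ r) :
    ∃ φ : ι → (Fin n → ℝ) →ₗ[ℝ] ℝ, ∀ i j, φ i (r j) = if i = j then 1 else 0 := by
  have hinj : Function.Injective r := hr.injective
  have hrs : LinearIndepOn ℝ id (Set.range r) := hr.linearIndepOn_id
  let B : Module.Basis _ ℝ (Fin n → ℝ) := Module.Basis.extend hrs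
  have hmem : ∀ j, r j ∈ hrs.extend (Set.subset_univ _) :=
    fun j => hrs.subset_extend _ ⟨j, rfl⟩
  refine ⟨fun j => B.coord ⟨r j, hmem j⟩, fun i j => ?_⟩
  have hBj : B ⟨r j, hmem j⟩ = r j := Module.Basis.extend_apply_self hrs ⟨r j, hmem j⟩
  have h2 : B.coord ⟨r i, hmem i⟩ (B ⟨r j, hmem j⟩) =
      if (⟨r i, hmem i⟩ : hrs.extend (Set.subset_univ _)) = ⟨r j, hmem j⟩ then 1 else 0 := by
    rw [Module.Basis.coord_apply, Module.Basis.repr_self]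
    simp [Finsupp.single_apply, eq_comm]
  rw [hBj] at h2
  rw [h2]
  congr 1
  simp only [Subtype.mk.injEq, eq_iff_iff]
  exact ⟨fun h => hinj h, fun h => by rw [h]⟩

lemma mem_SkCset_iff {xb : Fin n → ℝ} {r : ι → Fin n → ℝ} {C : Set (Fin n → ℝ)} {k : ι}
    {x : Fin n → ℝ} :
    x ∈ SkCset xb r C k ↔ ∃ q ∈ convexHull ℝ (⋃ j ∈ N2set xb r C,
      {y : Fin n → ℝ | ∃ l : ℝ, 0 ≤ l ∧ (l : EReal) < lamP xb (r j) C ∧ y = l • r j}),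
      ∃ l : ℝ, l ≤ 0 ∧ ∃ c ∈ recc C, x = xb + q + l • r k + c := by
  constructor
  · rintro h
    rw [SkCset, Set.mem_add] at h
    obtain ⟨u, hu, c, hc, hx⟩ := h
    rw [Set.mem_add] at hu
    obtain ⟨v, hv, w, hw, hu⟩ := hu
    rw [Set.mem_add] at hv
    obtain ⟨z, hz, q, hq, hv⟩ := hv
    rw [Set.mem_singleton_iff] at hz
    obtain ⟨l, hl, hwl⟩ := hw
    exact ⟨q, hq, l, hl, c, hc, by rw [← hx, ← hu, ← hv, hz, hwl]⟩
  · rintro ⟨q, hq, l, hl, c, hc, hx⟩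
    rw [SkCset, Set.mem_add]
    refine ⟨xb + q + l • r k, ?_, c, hc, by rw [hx]⟩
    rw [Set.mem_add]
    refine ⟨xb + q, ?_, l • r k, ⟨l, hl, rfl⟩, rfl⟩
    rw [Set.mem_add]
    exact ⟨xb, rfl, q, hq, rfl⟩

/-- Observation 1. For `k ∈ N₂`,
`recc(S_k^C) = recc(C) + {λ r^k : λ ≤ 0}`. -/
theorem stmt13 (xb : Fin n → ℝ) (r : ι → Fin n → ℝ) (hr : LinearIndependent ℝ r)
    (C : Set (Fin n → ℝ)) (hCopen : IsOpen C) (hCconv : Convex ℝ C)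
    (hxb : xb ∉ closure C) (hrecc : recc C ⊆ reccPBset r)
    (k : ι) (hk : k ∈ N2set xb r C) :
    recc (SkCset xb r C k)
      = recc C + {y : Fin n → ℝ | ∃ l : ℝ, l ≤ 0 ∧ y = l • r k} := by
  classical
  obtain ⟨φ, hφ⟩ := exists_coords r hr
  have hKzero : (0 : Fin n → ℝ) ∈ recc C := recc_zero_mem C
  have hKclosed : IsClosed (recc C) := recc_isClosed hCopen hCconv
  -- coordinates of elements of recc C
  have hKcoord : ∀ c ∈ recc C, (∀ j, 0 ≤ φ j c) ∧ c = ∑ j, (φ j c) • r j := by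
    intro c hc
    obtain ⟨t, ht0, hteq⟩ := hrecc hc
    have hco : ∀ i, φ i c = t i := by
      intro i
      rw [hteq, map_sum]
      simp only [map_smul, smul_eq_mul, hφ, mul_ite, mul_one, mul_zero]
      simp
    refine ⟨fun j => by rw [hco j]; exact ht0 j, ?_⟩
    conv_lhs => rw [hteq]
    exact Finset.sum_congr rfl fun j _ => by rw [hco j]
  -- norm bound on the convex hull
  set R : ℝ := ∑ j, max 0 ((lamP xb (r j) C).toReal) * ‖r j‖ with hRdef
  have hR0 : 0 ≤ R := Finset.sum_nonneg fun j _ => mul_nonneg (le_max_left _ _) (norm_nonneg _)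
  have hQR : ∀ q ∈ convexHull ℝ (⋃ j ∈ N2set xb r C,
      {y : Fin n → ℝ | ∃ l : ℝ, 0 ≤ l ∧ (l : EReal) < lamP xb (r j) C ∧ y = l • r j}),
      ‖q‖ ≤ R := by
    intro q hq
    have hsub : (⋃ j ∈ N2set xb r C,
        {y : Fin n → ℝ | ∃ l : ℝ, 0 ≤ l ∧ (l : EReal) < lamP xb (r j) C ∧ y = l • r j})
        ⊆ Metric.closedBall 0 R := by
      intro y hy
      simp only [Set.mem_iUnion, Set.mem_setOf_eq] at hy
      obtain ⟨j, hjN2, l, hl0, hlt, rfl⟩ := hy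
      have hne_top : lamP xb (r j) C ≠ ⊤ := hjN2.2.2.2.ne
      have hne_bot : lamP xb (r j) C ≠ ⊥ :=
        ne_of_gt (lt_trans (lt_trans EReal.bot_lt_zero hjN2.1) hjN2.2.2.1)
      have hcoe : ((lamP xb (r j) C).toReal : EReal) = lamP xb (r j) C :=
        EReal.coe_toReal hne_top hne_bot
      rw [← hcoe] at hlt
      have hlle : l ≤ (lamP xb (r j) C).toReal := le_of_lt (by exact_mod_cast hlt)
      rw [Metric.mem_closedBall, dist_zero_right, norm_smul, Real.norm_eq_abs,
        abs_of_nonneg hl0]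
      calc l * ‖r j‖ ≤ max 0 ((lamP xb (r j) C).toReal) * ‖r j‖ :=
            mul_le_mul_of_nonneg_right (hlle.trans (le_max_right _ _)) (norm_nonneg _)
        _ ≤ R := Finset.single_le_sum
            (f := fun i => max 0 ((lamP xb (r i) C).toReal) * ‖r i‖)
            (fun i _ => mul_nonneg (le_max_left _ _) (norm_nonneg _)) (Finset.mem_univ j)
    have := convexHull_min hsub (convex_closedBall _ _) hq
    rwa [Metric.mem_closedBall, dist_zero_right] at this
  -- r k is not a recession direction of C
  have hrkK : r k ∉ recc C := by
    intro hrk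
    have hne : {l : ℝ | 0 ≤ l ∧ xb + l • r k ∈ C}.Nonempty := by
      by_contra h
      rw [Set.not_nonempty_iff_eq_empty] at h
      have : lamM xb (r k) C = ⊤ := by rw [lamM, h, Set.image_empty, sInf_empty]
      exact absurd this hk.2.1.ne
    obtain ⟨l, hl0, hlC⟩ := hne
    have hne_top : lamP xb (r k) C ≠ ⊤ := hk.2.2.2.ne
    have hne_bot : lamP xb (r k) C ≠ ⊥ :=
      ne_of_gt (lt_trans (lt_trans EReal.bot_lt_zero hk.1) hk.2.2.1)
    set p := (lamP xb (r k) C).toReal with hpdef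
    have hcoe : (p : EReal) = lamP xb (r k) C := EReal.coe_toReal hne_top hne_bot
    have hmemP : ((l + max 0 (p + 1 - l) : ℝ) : EReal) ≤ lamP xb (r k) C := by
      apply le_sSup
      refine ⟨l + max 0 (p + 1 - l), ⟨add_nonneg hl0 (le_max_left _ _), ?_⟩, rfl⟩
      have h1 := hrk (xb + l • r k) hlC (max 0 (p + 1 - l)) (le_max_left _ _)
      have h2 : xb + l • r k + max 0 (p + 1 - l) • r k = xb + (l + max 0 (p + 1 - l)) • r k := by
        rw [add_smul]; abel
      rwa [h2] at h1
    rw [← hcoe] at hmemP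
    have h3 : l + max 0 (p + 1 - l) ≤ p := by exact_mod_cast hmemP
    have h4 : p + 1 - l ≤ max 0 (p + 1 - l) := le_max_right _ _
    linarith
  -- xb ∈ S
  have hx0S : xb ∈ SkCset xb r C k := by
    rw [mem_SkCset_iff]
    refine ⟨0, ?_, 0, le_refl 0, 0, hKzero, by simp⟩
    apply subset_convexHull
    simp only [Set.mem_iUnion, Set.mem_setOf_eq]
    refine ⟨k, hk, 0, le_refl 0, ?_, (zero_smul ℝ _).symm⟩
    exact_mod_cast lt_trans hk.1 hk.2.2.1
  -- the two inclusions
  apply Set.Subset.antisymm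
  · -- hard direction
    intro d hd
    have hmem : ∀ m : ℕ, ∃ q, (q ∈ convexHull ℝ (⋃ j ∈ N2set xb r C,
        {y : Fin n → ℝ | ∃ l : ℝ, 0 ≤ l ∧ (l : EReal) < lamP xb (r j) C ∧ y = l • r j})) ∧
        ∃ l : ℝ, l ≤ 0 ∧ ∃ c, c ∈ recc C ∧ ((m : ℝ) + 1) • d = q + l • r k + c := by
      intro m
      have h1 : xb + ((m : ℝ) + 1) • d ∈ SkCset xb r C k := hd xb hx0S _ (by positivity)
      rw [mem_SkCset_iff] at h1
      obtain ⟨q, hq, l, hl, c, hc, heq⟩ := h1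
      refine ⟨q, hq, l, hl, c, hc, ?_⟩
      have h2 : xb + ((m : ℝ) + 1) • d = xb + (q + l • r k + c) := by rw [heq]; abel
      exact add_left_cancel h2
    choose q hq l hl c hc heq using hmem
    have htpos : ∀ m : ℕ, (0 : ℝ) < (m : ℝ) + 1 := fun m => by positivity
    have ht1 : ∀ m : ℕ, (1 : ℝ) ≤ (m : ℝ) + 1 := fun m => by
      have : (0:ℝ) ≤ (m:ℝ) := Nat.cast_nonneg m
      linarith
    set ν : ℕ → ℝ := fun m => -(l m) / ((m : ℝ) + 1) with hνdef
    have hνnn : ∀ m, 0 ≤ ν m := fun m =>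
      div_nonneg (neg_nonneg.mpr (hl m)) (htpos m).le
    have hc'K : ∀ m : ℕ, ((m : ℝ) + 1)⁻¹ • c m ∈ recc C := fun m =>
      recc_smul_mem (hc m) (inv_nonneg.mpr (htpos m).le)
    have hid : ∀ m : ℕ, ((m : ℝ) + 1)⁻¹ • c m = d + ν m • r k - ((m : ℝ) + 1)⁻¹ • q m := by
      intro m
      have h1 : c m = ((m : ℝ) + 1) • d - q m - l m • r k := by
        rw [heq m]; abel
      rw [h1, hνdef]
      have hne : ((m : ℝ) + 1) ≠ 0 := (htpos m).ne'
      match_scalars <;> field_simp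
    -- coordinate identities
    have hA : ∀ (j : ι) (m : ℕ), ((m : ℝ) + 1) * φ j d
        = φ j (q m) + l m * (if j = k then 1 else 0) + φ j (c m) := by
      intro j m
      have h2 := congrArg (φ j) (heq m)
      simpa only [map_add, map_smul, smul_eq_mul, hφ] using h2
    -- coordinate bounds
    set M : ι → ℝ := fun j => ‖(LinearMap.toContinuousLinearMap (φ j))‖ * R with hMdef
    have hφq : ∀ (j : ι) (m : ℕ), |φ j (q m)| ≤ M j := by
      intro j m
      calc |φ j (q m)| = ‖(LinearMap.toContinuousLinearMap (φ j)) (q m)‖ := rfl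
        _ ≤ ‖(LinearMap.toContinuousLinearMap (φ j))‖ * ‖q m‖ :=
            ContinuousLinearMap.le_opNorm _ _
        _ ≤ M j := mul_le_mul_of_nonneg_left (hQR _ (hq m)) (norm_nonneg _)
    have hφqt : ∀ (j : ι) (m : ℕ), |((m : ℝ) + 1)⁻¹ * φ j (q m)| ≤ M j := by
      intro j m
      rw [abs_mul, abs_of_nonneg (inv_nonneg.mpr (htpos m).le)]
      calc ((m : ℝ) + 1)⁻¹ * |φ j (q m)| ≤ 1 * |φ j (q m)| := by
            apply mul_le_mul_of_nonneg_right _ (abs_nonneg _)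
            rw [inv_le_one_iff₀]
            right; exact ht1 m
        _ = |φ j (q m)| := one_mul _
        _ ≤ M j := hφq j m
    have hlink : ∀ (j : ι) (m : ℕ), φ j (((m : ℝ) + 1)⁻¹ • c m)
        = ((m : ℝ) + 1)⁻¹ * φ j (c m) := by
      intro j m; rw [map_smul, smul_eq_mul]
    have hφc' : ∀ (j : ι) (m : ℕ), j ≠ k →
        φ j (((m : ℝ) + 1)⁻¹ • c m) ≤ |φ j d| + M j := by
      intro j m hjk
      have h2 := hA j m
      rw [if_neg hjk, mul_zero, add_zero] at h2
      -- h2 : (m+1) * φ j d = φ j (q m) + φ j (c m)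
      have h3 : ((m : ℝ) + 1)⁻¹ * φ j (c m)
          = φ j d - ((m : ℝ) + 1)⁻¹ * φ j (q m) := by
        have hne : ((m : ℝ) + 1) ≠ 0 := (htpos m).ne'
        field_simp
        linarith [h2]
      have h4 := abs_le.mp (hφqt j m)
      have h6 := le_abs_self (φ j d)
      rw [hlink, h3]
      linarith
    -- the key boundedness claim
    have hclaim : ∃ B : ℝ, ∀ cc ∈ recc C, (∀ j, j ≠ k → φ j cc ≤ |φ j d| + M j) →
        φ k cc ≤ B := by
      by_contra hcon
      push_neg at hcon
      choose F hFK hFb hFgt using hcon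
      set g : ℕ → (Fin n → ℝ) := fun i => F ((i : ℝ) + 1) with hgdef
      have hgK : ∀ i, g i ∈ recc C := fun i => hFK _
      have hggt : ∀ i : ℕ, (i : ℝ) + 1 < φ k (g i) := fun i => hFgt _
      have hgpos : ∀ i : ℕ, (0 : ℝ) < φ k (g i) := fun i =>
        lt_of_lt_of_le (by positivity) (hggt i).le
      set u : ℕ → (Fin n → ℝ) := fun i => (φ k (g i))⁻¹ • g i with hudef
      have huK : ∀ i, u i ∈ recc C := fun i =>
        recc_smul_mem (hgK i) (inv_nonneg.mpr (hgpos i).le)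
      have hφu : ∀ j i, φ j (u i) = φ j (g i) / φ k (g i) := by
        intro j i
        rw [hudef]
        simp only [map_smul, smul_eq_mul]
        rw [div_eq_inv_mul]
      have hcoeff : ∀ j : ι, Filter.Tendsto (fun i => φ j (u i)) Filter.atTop
          (nhds (if j = k then (1:ℝ) else 0)) := by
        intro j
        by_cases hjk : j = k
        · subst hjk
          simp only [if_pos rfl]
          have heq1 : (fun i => φ j (u i)) = fun _ => (1 : ℝ) := by
            funext i
            rw [hφu, div_self (hgpos i).ne']
          rw [heq1]
          exact tendsto_const_nhds
        · simp only [if_neg hjk]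
          apply squeeze_zero (f := fun i => φ j (u i))
            (g := fun i : ℕ => (|φ j d| + M j) / ((i : ℝ) + 1))
          · intro i
            rw [hφu]
            exact div_nonneg ((hKcoord _ (hgK i)).1 j) (hgpos i).le
          · intro i
            rw [hφu]
            exact div_le_div₀ (by positivity) (hFb _ j hjk) (by positivity) (hggt i).le
          · have h7 : Filter.Tendsto (fun i : ℕ => (|φ j d| + M j) * (1 / ((i : ℝ) + 1)))
                Filter.atTop (nhds ((|φ j d| + M j) * 0)) :=
              tendsto_one_div_add_atTop_nhds_zero_nat.const_mul _
            simp only [mul_zero] at h7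
            apply h7.congr
            intro i
            rw [mul_one_div]
      have hulim : Filter.Tendsto u Filter.atTop (nhds (r k)) := by
        have hsum : Filter.Tendsto (fun i => ∑ j, (φ j (u i)) • r j) Filter.atTop
            (nhds (∑ j, (if j = k then (1:ℝ) else 0) • r j)) :=
          tendsto_finset_sum _ fun j _ => (hcoeff j).smul_const (r j)
        have hrw : (fun i => ∑ j, (φ j (u i)) • r j) = u := by
          funext i
          exact ((hKcoord _ (huK i)).2).symm
        rw [hrw] at hsum
        have hfin : (∑ j, (if j = k then (1:ℝ) else 0) • r j) = r k := by
          simp [ite_smul]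
        rwa [hfin] at hsum
      exact hrkK (hKclosed.mem_of_tendsto hulim (Filter.Eventually.of_forall huK))
    obtain ⟨B, hB⟩ := hclaim
    set B2 : ℝ := B + |φ k d| + M k with hB2def
    have hνB : ∀ m, ν m ≤ B2 := by
      intro m
      have h1 : φ k (((m : ℝ) + 1)⁻¹ • c m) ≤ B := hB _ (hc'K m) (fun j hj => hφc' j m hj)
      rw [hlink] at h1
      have h2 := hA k m
      rw [if_pos rfl, mul_one] at h2
      -- h2 : (m+1) * φ k d = φ k (q m) + l m + φ k (c m)
      have h3 := abs_le.mp (hφqt k m)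
      have h7 := neg_abs_le (φ k d)
      have hne : ((m : ℝ) + 1) ≠ 0 := (htpos m).ne'
      have h8 : ν m = ((m : ℝ) + 1)⁻¹ * φ k (q m) + ((m : ℝ) + 1)⁻¹ * φ k (c m)
          - φ k d := by
        have h9 : -l m = φ k (q m) + φ k (c m) - ((m : ℝ) + 1) * φ k d := by linarith
        show -l m / ((m : ℝ) + 1) = _
        rw [h9]
        field_simp
      rw [hB2def, h8]
      linarith
    have hB2nn : 0 ≤ B2 := le_trans (hνnn 0) (hνB 0)
    have hcont : Continuous fun s : ℝ => Metric.infDist (d + s • r k) (recc C) :=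
      (Metric.continuous_infDist_pt (recc C)).comp
        (continuous_const.add (continuous_id.smul continuous_const))
    obtain ⟨sm, hsmem, hsmin⟩ := (isCompact_Icc (a := (0:ℝ)) (b := B2)).exists_isMinOn
      ⟨0, le_refl 0, hB2nn⟩ hcont.continuousOn
    have hzero : Metric.infDist (d + sm • r k) (recc C) = 0 := by
      apply le_antisymm _ Metric.infDist_nonneg
      have hle : ∀ m : ℕ, Metric.infDist (d + sm • r k) (recc C) ≤ R / ((m : ℝ) + 1) := by
        intro m
        have h1 : Metric.infDist (d + ν m • r k) (recc C) ≤ R / ((m : ℝ) + 1) := by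
          have h2 := Metric.infDist_le_dist_of_mem (hc'K m)
            (x := d + ν m • r k)
          have h3 : dist (d + ν m • r k) (((m : ℝ) + 1)⁻¹ • c m) = ‖((m : ℝ) + 1)⁻¹ • q m‖ := by
            rw [dist_eq_norm, hid m]
            congr 1
            abel
          rw [h3, norm_smul, Real.norm_eq_abs, abs_of_nonneg (inv_nonneg.mpr (htpos m).le)]
            at h2
          calc Metric.infDist (d + ν m • r k) (recc C) ≤ ((m : ℝ) + 1)⁻¹ * ‖q m‖ := h2
            _ ≤ ((m : ℝ) + 1)⁻¹ * R := by
                apply mul_le_mul_of_nonneg_left (hQR _ (hq m)) (inv_nonneg.mpr (htpos m).le)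
            _ = R / ((m : ℝ) + 1) := (div_eq_inv_mul _ _).symm
        exact le_trans (isMinOn_iff.mp hsmin (ν m) ⟨hνnn m, hνB m⟩) h1
      apply ge_of_tendsto (f := fun m : ℕ => R / ((m : ℝ) + 1)) (x := Filter.atTop)
      · have h7 : Filter.Tendsto (fun i : ℕ => R * (1 / ((i : ℝ) + 1)))
            Filter.atTop (nhds (R * 0)) :=
          tendsto_one_div_add_atTop_nhds_zero_nat.const_mul _
        simp only [mul_zero] at h7
        apply h7.congr
        intro i
        rw [mul_one_div]
      · exact Filter.Eventually.of_forall hle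
    have hmemK : d + sm • r k ∈ recc C :=
      (hKclosed.mem_iff_infDist_zero ⟨0, hKzero⟩).mpr hzero
    rw [Set.mem_add]
    refine ⟨d + sm • r k, hmemK, (-sm) • r k, ⟨-sm, neg_nonpos.mpr hsmem.1, rfl⟩, ?_⟩
    module
  · -- easy direction
    rintro d hd
    rw [Set.mem_add] at hd
    obtain ⟨c0, hc0, w, ⟨l0, hl0, rfl⟩, rfl⟩ := hd
    intro a ha t ht
    rw [mem_SkCset_iff] at ha ⊢
    obtain ⟨q0, hq0, l1, hl1, c1, hc1, rfl⟩ := ha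
    refine ⟨q0, hq0, l1 + t * l0, by nlinarith, c1 + t • c0,
      recc_add_mem hc1 (recc_smul_mem hc0 ht), ?_⟩
    module
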